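/- Let C be a monoidal category and C̄ its idempotent (Karoubi) completion. Then for objects A, B of C, the natural map Hom_{C(S¹)}(A,B) → Hom_{C̄(S¹)}(A,B) between horizontal trace hom-spaces is a bijection; i.e., the induced functor C(S¹) → C̄(S¹) is fully faithful. -/

import Mathlib

open CategoryTheory MonoidalCategory

/-- The relation generating the equivalence on pairs `(Z, φ : A ⊗ Z ⟶ Z ⊗ B)` defining
the horizontal trace: for `α : Z ⟶ Z'` and `ψ : A ⊗ Z' ⟶ Z ⊗ B`, the pair
`(Z, (1 ⊗ α) ≫ ψ)` is related to `(Z', ψ ≫ (α ⊗ 1))`. -/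
def HTRel (C : Type*) [Category C] [MonoidalCategory C] (A B : C) :
    (Σ Z : C, (A ⊗ Z ⟶ Z ⊗ B)) → (Σ Z : C, (A ⊗ Z ⟶ Z ⊗ B)) → Prop :=
  fun p q => ∃ (α : p.1 ⟶ q.1) (ψ : A ⊗ q.1 ⟶ p.1 ⊗ B),
    p.2 = (A ◁ α) ≫ ψ ∧ q.2 = ψ ≫ (α ▷ B)

/-- The hom-space `Hom_{C(S¹)}(A, B)` of the horizontal trace of a monoidal category. -/
def HTHom (C : Type*) [Category C] [MonoidalCategory C] (A B : C) : Type _ :=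
  Quot (HTRel C A B)

/-- Let `C` be a monoidal category and `C̄` its idempotent (Karoubi) completion, with
(monoidal, fully faithful) inclusion `F : C ⥤ C̄`; every object of `C̄` is a retract of an
object coming from `C`.  Then for objects `A, B` of `C`, the natural map
`Hom_{C(S¹)}(A, B) → Hom_{C̄(S¹)}(F A, F B)` between horizontal trace hom-spaces,
sending the class of `(Z, φ)` to the class of `(F Z, μ ≫ F φ ≫ μ⁻¹)`, is a bijection;
i.e. the induced functor `C(S¹) → C̄(S¹)` is fully faithful. -/
theorem horizontal_trace_idempotent_completion_fully_faithful
    (C D : Type) [Category C] [Category D]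
    [MonoidalCategory C] [MonoidalCategory D]
    (F : C ⥤ D) [F.Monoidal] [F.Full] [F.Faithful]
    -- `D` is the idempotent completion of `C`: every object of `D` is a retract of an
    -- object in the image of `F`:
    (hretract : ∀ d : D, ∃ (c : C) (s : d ⟶ F.obj c) (π : F.obj c ⟶ d), s ≫ π = 𝟙 d)
    (A B : C) :
    ∃ g : HTHom C A B → HTHom D (F.obj A) (F.obj B),
      (∀ p : Σ Z : C, (A ⊗ Z ⟶ Z ⊗ B),
        g (Quot.mk (HTRel C A B) p)
          = Quot.mk (HTRel D (F.obj A) (F.obj B))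
              ⟨F.obj p.1,
                Functor.LaxMonoidal.μ F A p.1 ≫ F.map p.2 ≫
                  Functor.OplaxMonoidal.δ F p.1 B⟩)
      ∧ Function.Bijective g := by
  classical
  choose c s π hsπ using hretract
  -- the map on representatives for `g`
  set gf : (Σ Z : C, (A ⊗ Z ⟶ Z ⊗ B)) → HTHom D (F.obj A) (F.obj B) :=
    fun p => Quot.mk _ ⟨F.obj p.1,
      Functor.LaxMonoidal.μ F A p.1 ≫ F.map p.2 ≫ Functor.OplaxMonoidal.δ F p.1 B⟩
    with hgfdef
  have hgf : ∀ p q, HTRel C A B p q → gf p = gf q := by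
    rintro ⟨Z, φ⟩ ⟨Z', φ'⟩ ⟨α, ψ, h1, h2⟩
    dsimp at h1 h2
    apply Quot.sound
    refine ⟨F.map α,
      Functor.LaxMonoidal.μ F A Z' ≫ F.map ψ ≫ Functor.OplaxMonoidal.δ F Z B, ?_, ?_⟩
    · dsimp; rw [h1]; simp
    · dsimp; rw [h2]; simp
  -- the retraction on representatives
  set hfm : (Σ W : D, (F.obj A ⊗ W ⟶ W ⊗ F.obj B)) → (Σ Z : C, (A ⊗ Z ⟶ Z ⊗ B)) :=
    fun p => ⟨c p.1,
      F.preimage (Functor.OplaxMonoidal.δ F A (c p.1) ≫ (F.obj A ◁ π p.1) ≫ p.2 ≫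
        (s p.1 ▷ F.obj B) ≫ Functor.LaxMonoidal.μ F (c p.1) B)⟩ with hfmdef
  set hf : (Σ W : D, (F.obj A ⊗ W ⟶ W ⊗ F.obj B)) → HTHom C A B :=
    fun p => Quot.mk _ (hfm p) with hfdef
  have hhf : ∀ p q, HTRel D (F.obj A) (F.obj B) p q → hf p = hf q := by
    rintro ⟨W, φ⟩ ⟨W', φ'⟩ ⟨α, ψ, h1, h2⟩
    dsimp at h1 h2
    apply Quot.sound
    refine ⟨F.preimage (π W ≫ α ≫ s W'),
      F.preimage (Functor.OplaxMonoidal.δ F A (c W') ≫ (F.obj A ◁ π W') ≫ ψ ≫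
        (s W ▷ F.obj B) ≫ Functor.LaxMonoidal.μ F (c W) B), ?_, ?_⟩
    · apply F.map_injective
      dsimp only [hfm]
      simp only [Functor.map_comp, Functor.map_preimage]
      rw [← Functor.OplaxMonoidal.δ_natural_right_assoc, Functor.map_preimage, h1]
      simp only [← MonoidalCategory.whiskerLeft_comp_assoc]
      simp only [Category.assoc, hsπ, reassoc_of% (hsπ W'), Category.comp_id]
      simp only [MonoidalCategory.whiskerLeft_comp, MonoidalCategory.comp_whiskerRight,
        Category.assoc]
    · apply F.map_injective
      dsimp only [hfm]
      simp only [Functor.map_comp, Functor.map_preimage, Category.assoc]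
      rw [← Functor.LaxMonoidal.μ_natural_left, Functor.map_preimage, h2]
      simp only [← MonoidalCategory.comp_whiskerRight_assoc,
        ← MonoidalCategory.comp_whiskerRight]
      simp only [Category.assoc, reassoc_of% (hsπ W), Category.comp_id]
      simp only [MonoidalCategory.whiskerLeft_comp, MonoidalCategory.comp_whiskerRight,
        Category.assoc]
  refine ⟨Quot.lift gf hgf, fun p => rfl, ?_, ?_⟩
  · -- injectivity via the retraction
    have hleft : Function.LeftInverse (Quot.lift hf hhf) (Quot.lift gf hgf) := by
      intro x
      induction x using Quot.ind with
      | _ p =>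
        obtain ⟨Z, φ⟩ := p
        show hf ⟨F.obj Z, _⟩ = Quot.mk _ ⟨Z, φ⟩
        apply Quot.sound
        refine ⟨F.preimage (π (F.obj Z)), φ ≫ (F.preimage (s (F.obj Z)) ▷ B), ?_, ?_⟩
        · apply F.map_injective
          dsimp only [hfm]
          simp only [Functor.map_comp, Functor.map_preimage]
          conv_lhs => rw [← Functor.map_preimage F (π (F.obj Z)),
            ← Functor.map_preimage F (s (F.obj Z))]
          rw [Functor.OplaxMonoidal.δ_natural_right_assoc]
          simp only [Category.assoc]
          rw [Functor.Monoidal.δ_μ_assoc, Functor.LaxMonoidal.μ_natural_left,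
            Functor.Monoidal.δ_μ_assoc]
        · dsimp only
          have hsp : F.preimage (s (F.obj Z)) ≫ F.preimage (π (F.obj Z)) = 𝟙 Z :=
            F.map_injective (by simp [hsπ])
          rw [Category.assoc, ← MonoidalCategory.comp_whiskerRight, hsp]
          simp
    exact hleft.injective
  · -- surjectivity
    intro y
    induction y using Quot.ind with
    | _ p =>
      obtain ⟨W, φ⟩ := p
      refine ⟨Quot.mk _ (hfm ⟨W, φ⟩), ?_⟩
      show gf (hfm ⟨W, φ⟩) = Quot.mk _ ⟨W, φ⟩
      rw [hgfdef, hfmdef]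
      dsimp only
      apply Quot.sound
      refine ⟨π W, φ ≫ (s W ▷ F.obj B), ?_, ?_⟩
      · dsimp only
        rw [Functor.map_preimage]
        simp
      · dsimp only
        rw [Category.assoc, ← MonoidalCategory.comp_whiskerRight, hsπ]
        simp
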